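/- For a finite commutative ring R, the nil clean graph G_N(R) is bipartite if and only if R is a field. -/

import Mathlib

def IsNilClean {R : Type*} [CommRing R] (r : R) : Prop :=
  ∃ n e : R, IsNilpotent n ∧ IsIdempotentElem e ∧ r = n + e

def nilCleanGraph (R : Type*) [CommRing R] : SimpleGraph R where
  Adj x y := x ≠ y ∧ IsNilClean (x + y)
  symm := ⟨by
    rintro x y ⟨hxy, n, e, hn, he, h⟩
    exact ⟨hxy.symm, n, e, hn, he, by rwa [add_comm]⟩⟩
  loopless := ⟨by rintro x ⟨h, -⟩; exact h rfl⟩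

lemma nc_adj {R : Type*} [CommRing R] {x y : R} :
    (nilCleanGraph R).Adj x y ↔ x ≠ y ∧ IsNilClean (x + y) := Iff.rfl

lemma isNilClean_field_iff {F : Type*} [Field F] (r : F) :
    IsNilClean r ↔ r = 0 ∨ r = 1 := by
  constructor
  · rintro ⟨n, e, hn, he, rfl⟩
    rw [hn.eq_zero, zero_add]
    have h0 : e * (e - 1) = 0 := by
      rw [mul_sub, he.eq, mul_one, sub_self]
    rcases mul_eq_zero.1 h0 with h | h
    · exact Or.inl h
    · exact Or.inr (sub_eq_zero.1 h)
  · rintro (rfl | rfl)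
    · exact ⟨0, 0, IsNilpotent.zero, IsIdempotentElem.zero, by ring⟩
    · exact ⟨0, 1, IsNilpotent.zero, IsIdempotentElem.one, by ring⟩

/-- auxiliary: residue of a number `< 2p` mod `p`. -/
lemma sum_mod_aux (p s r : ℕ) (hp : 0 < p) (hs : s < 2 * p) (h : s % p = r) :
    s = r ∨ s = p + r := by
  have h1 := Nat.div_add_mod s p
  have h2 : s / p < 2 := Nat.div_lt_of_lt_mul (by omega)
  interval_cases h3 : s / p <;> omega

/-- coloring of the prime field -/
def gcol (p : ℕ) (a : ZMod p) : Bool := decide (a.val ≠ 0 ∧ 2 * a.val < p)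

lemma gcol_ne {p : ℕ} (hp : p.Prime) (hodd : p % 2 = 1) {a b : ZMod p} (hab : a ≠ b)
    (h : a + b = 0 ∨ a + b = 1) : gcol p a ≠ gcol p b := by
  haveI : NeZero p := ⟨hp.ne_zero⟩
  haveI : Fact (1 < p) := ⟨hp.one_lt⟩
  have hva : a.val < p := ZMod.val_lt a
  have hvb : b.val < p := ZMod.val_lt b
  have hvab : a.val ≠ b.val := fun hh => hab (ZMod.val_injective p hh)
  have hsum : (a + b).val = (a.val + b.val) % p := ZMod.val_add a b
  simp only [gcol, ne_eq, decide_eq_decide]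
  rcases h with h | h
  · rw [h, ZMod.val_zero] at hsum
    rcases sum_mod_aux p (a.val + b.val) 0 hp.pos (by omega) hsum.symm with h' | h' <;> omega
  · rw [h, ZMod.val_one] at hsum
    rcases sum_mod_aux p (a.val + b.val) 1 hp.pos (by omega) hsum.symm with h' | h' <;> omega

section Odd

variable (F : Type*) [Field F] [Fintype F] (p : ℕ) [Fact p.Prime] [CharP F p]

noncomputable def nphi : ZMod p →+* F := ZMod.castHom (dvd_refl p) F

noncomputable def nK : AddSubgroup F := (nphi F p).toAddMonoidHom.range

open Classical in
noncomputable def ncol (u : F ⧸ nK F p → ℕ) (x : F) : Bool :=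
  if h : ∃ a : ZMod p, nphi F p a = x then gcol p h.choose
  else decide (u (QuotientAddGroup.mk x) < u (QuotientAddGroup.mk (-x)))

lemma mem_nK_iff (x : F) : x ∈ nK F p ↔ ∃ a : ZMod p, nphi F p a = x :=
  AddMonoidHom.mem_range

lemma ncol_valid (hodd : p ≠ 2) (u : F ⧸ nK F p → ℕ) (hu : Function.Injective u)
    {x y : F} (hxy : x ≠ y) (h : x + y = 0 ∨ x + y = 1) :
    ncol F p u x ≠ ncol F p u y := by
  have hp : p.Prime := Fact.out
  have hinj : Function.Injective (nphi F p) := (nphi F p).injective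
  have hmod : p % 2 = 1 := Nat.odd_iff.1 (hp.odd_of_ne_two hodd)
  have h2 : (2 : ZMod p) ≠ 0 := by
    intro hc
    have : ((2 : ℕ) : ZMod p) = 0 := by exact_mod_cast hc
    have hle := Nat.le_of_dvd (by norm_num) ((ZMod.natCast_eq_zero_iff 2 p).1 this)
    have := hp.two_le
    omega
  by_cases hx : ∃ a : ZMod p, nphi F p a = x
  · have hy : ∃ b : ZMod p, nphi F p b = y := by
      obtain ⟨a, ha⟩ := hx
      rcases h with h | h
      · exact ⟨-a, by rw [map_neg, ha, neg_eq_of_add_eq_zero_right h]⟩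
      · exact ⟨1 - a, by rw [map_sub, map_one, ha]; linear_combination -h⟩
    simp only [ncol, dif_pos hx, dif_pos hy]
    have ha := hx.choose_spec
    have hb := hy.choose_spec
    apply gcol_ne hp hmod
    · intro hc; exact hxy (by rw [← ha, ← hb, hc])
    · rcases h with h | h
      · left
        apply hinj
        rw [map_add, ha, hb, map_zero, h]
      · right
        apply hinj
        rw [map_add, ha, hb, map_one, h]
  · have hy : ¬∃ b : ZMod p, nphi F p b = y := by
      rintro ⟨b, hb⟩
      rcases h with h | h
      · exact hx ⟨-b, by rw [map_neg, hb, neg_eq_of_add_eq_zero_left h]⟩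
      · exact hx ⟨1 - b, by rw [map_sub, map_one, hb]; linear_combination -h⟩
    simp only [ncol, dif_neg hx, dif_neg hy]
    have hyx : (QuotientAddGroup.mk y : F ⧸ nK F p) = QuotientAddGroup.mk (-x) := by
      rw [QuotientAddGroup.eq]
      rw [mem_nK_iff]
      rcases h with h | h
      · exact ⟨0, by rw [map_zero]; linear_combination h⟩
      · exact ⟨-1, by rw [map_neg, map_one]; linear_combination h⟩
    have hyx' : (QuotientAddGroup.mk (-y) : F ⧸ nK F p) = QuotientAddGroup.mk x := by
      rw [QuotientAddGroup.eq, neg_neg, mem_nK_iff]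
      rcases h with h | h
      · exact ⟨0, by rw [map_zero]; linear_combination -h⟩
      · exact ⟨1, by rw [map_one]; linear_combination -h⟩
    rw [hyx, hyx']
    have hne : (QuotientAddGroup.mk x : F ⧸ nK F p) ≠ QuotientAddGroup.mk (-x) := by
      intro hc
      rw [QuotientAddGroup.eq, mem_nK_iff] at hc
      obtain ⟨c, hc⟩ := hc
      apply hx
      refine ⟨-(2⁻¹ * c), ?_⟩
      have h2F : nphi F p 2 ≠ 0 := fun hh => h2 (hinj (by rw [hh, map_zero]))
      have h2F' : (2 : F) ≠ 0 := by rwa [map_ofNat] at h2F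
      rw [map_neg, map_mul, map_inv₀]
      rw [map_ofNat]
      field_simp
      linear_combination -hc
    have := hu.ne hne
    simp only [ne_eq, decide_eq_decide]
    omega

end Odd

lemma field_colorable (F : Type*) [Field F] [Fintype F] :
    (nilCleanGraph F).Colorable 2 := by
  have hadj : ∀ x y : F, (nilCleanGraph F).Adj x y → x ≠ y ∧ (x + y = 0 ∨ x + y = 1) := by
    intro x y hxy
    rw [nc_adj] at hxy
    exact ⟨hxy.1, (isNilClean_field_iff _).1 hxy.2⟩
  set p := ringChar F with hpdef
  haveI : CharP F p := ringChar.charP F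
  have hp : p.Prime := CharP.char_is_prime F p
  haveI : Fact p.Prime := ⟨hp⟩
  by_cases hp2 : p = 2
  · -- characteristic 2
    haveI : CharP F 2 := hp2 ▸ (inferInstance : CharP F p)
    let u : F → ℕ := fun x => (Fintype.equivFin F x : ℕ)
    have hu : Function.Injective u := fun a b h =>
      (Fintype.equivFin F).injective (Fin.val_injective h)
    have C : (nilCleanGraph F).Coloring Bool := by
      refine SimpleGraph.Coloring.mk (fun x => decide (u x < u (x + 1))) ?_
      intro x y hxy
      obtain ⟨hne, h⟩ := hadj x y hxy
      have hy : y = x + 1 := by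
        rcases h with h | h
        · exfalso
          have hyx : y = -x := by linear_combination h
          rw [CharTwo.neg_eq] at hyx
          exact hne hyx.symm
        · have : y = 1 - x := by linear_combination h
          rw [this, CharTwo.sub_eq_add, add_comm]
      subst hy
      have hxx : x + 1 + 1 = x := by
        linear_combination (CharTwo.two_eq_zero (R := F))
      show decide (u x < u (x + 1)) ≠ decide (u (x + 1) < u (x + 1 + 1))
      rw [hxx]
      have huv : u x ≠ u (x + 1) := hu.ne hne
      simp only [ne_eq, decide_eq_decide]
      omega
    exact Fintype.card_bool ▸ C.colorable
  · -- odd characteristic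
    haveI : Finite (F ⧸ nK F p) := Quotient.finite _
    obtain ⟨u, hu⟩ := exists_injective_nat (F ⧸ nK F p)
    have C : (nilCleanGraph F).Coloring Bool := by
      refine SimpleGraph.Coloring.mk (ncol F p u) ?_
      intro x y hxy
      obtain ⟨hne, h⟩ := hadj x y hxy
      exact ncol_valid F p hp2 u hu hne h
    exact Fintype.card_bool ▸ C.colorable

lemma not_field_not_colorable (R : Type*) [CommRing R] [Fintype R] [Nontrivial R]
    (h : ¬ IsField R) : ¬ (nilCleanGraph R).Colorable 2 := by
  classical
  -- find a nonzero nonunit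
  have ⟨a, ha0, hau⟩ : ∃ a : R, a ≠ 0 ∧ ¬ IsUnit a := by
    by_contra hc
    push_neg at hc
    exact h ⟨exists_pair_ne R, mul_comm, fun {a} ha => by
      obtain ⟨v, hv⟩ := hc a ha
      exact ⟨↑v⁻¹, by rw [← hv]; exact v.mul_inv⟩⟩
  -- idempotent power
  obtain ⟨m, n, hmn, hpow⟩ := Finite.exists_ne_map_eq_of_infinite (fun i : ℕ => a ^ i)
  wlog hlt : m < n generalizing m n
  · exact this n m hmn.symm hpow.symm (by omega)
  have hm1 : 1 ≤ m := by
    by_contra hm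
    have hm0 : m = 0 := by omega
    apply hau
    apply IsUnit.of_mul_eq_one (a := a) (a ^ (n - 1))
    have : a ^ n = 1 := by rw [← hpow, hm0, pow_zero]
    rw [← pow_succ']
    rw [show n - 1 + 1 = n by omega, this]
  set d := n - m with hd
  have hd1 : 1 ≤ d := by omega
  have step : ∀ s, m ≤ s → a ^ (s + d) = a ^ s := by
    intro s hs
    calc a ^ (s + d) = a ^ n * a ^ (s - m) := by rw [← pow_add]; congr 1; omega
    _ = a ^ m * a ^ (s - m) := by rw [← hpow]
    _ = a ^ s := by rw [← pow_add]; congr 1; omega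
  have steps : ∀ j s, m ≤ s → a ^ (s + j * d) = a ^ s := by
    intro j
    induction j with
    | zero => intro s hs; simp
    | succ k ih =>
      intro s hs
      have : s + (k + 1) * d = (s + d) + k * d := by ring
      rw [this, ih (s + d) (by omega), step s hs]
  set k := m * d with hk
  have hk1 : 1 ≤ k := Nat.one_le_iff_ne_zero.2 (by positivity)
  have hkm : m ≤ k := le_mul_of_one_le_right (by omega) hd1
  have hidem : IsIdempotentElem (a ^ k) := by
    show a ^ k * a ^ k = a ^ k
    rw [← pow_add]
    have : k + k = k + m * d := by rw [hk]
    rw [this, steps m k hkm]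
  have hne1 : a ^ k ≠ 1 := by
    intro hc
    apply hau
    apply IsUnit.of_mul_eq_one (a := a) (a ^ (k - 1))
    rw [← pow_succ', show k - 1 + 1 = k by omega, hc]
  -- build a triangle
  have ⟨x, y, z, hxy, hxz, hyz, axy, axz, ayz⟩ :
      ∃ x y z : R, x ≠ y ∧ x ≠ z ∧ y ≠ z ∧ IsNilClean (x + y) ∧ IsNilClean (x + z) ∧
        IsNilClean (y + z) := by
    by_cases he0 : a ^ k = 0
    · -- a is nilpotent
      have hnil : IsNilpotent a := ⟨k, he0⟩
      have ha1 : a ≠ 1 := fun hc => one_ne_zero (by rwa [hc, one_pow] at he0)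
      refine ⟨0, a, 1, fun hc => ha0 hc.symm, fun hc => zero_ne_one hc, ha1, ?_, ?_, ?_⟩
      · exact ⟨a, 0, hnil, IsIdempotentElem.zero, by ring⟩
      · exact ⟨0, 1, IsNilpotent.zero, IsIdempotentElem.one, by ring⟩
      · exact ⟨a, 1, hnil, IsIdempotentElem.one, by ring⟩
    · set e := a ^ k with hedef
      have hee : e * e = e := hidem
      have heh : e ≠ 1 - e := by
        intro hc
        apply he0
        have h1 : e * (1 - e) = 0 := by linear_combination -hee
        rw [← hc, hee] at h1
        exact h1
      have hidem2 : IsIdempotentElem (1 - e) := by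
        show (1 - e) * (1 - e) = 1 - e
        linear_combination hee
      refine ⟨0, e, 1 - e, fun hc => he0 hc.symm, ?_, heh, ?_, ?_, ?_⟩
      · intro hc
        apply hne1
        linear_combination hc
      · exact ⟨0, e, IsNilpotent.zero, hidem, by ring⟩
      · exact ⟨0, 1 - e, IsNilpotent.zero, hidem2, by ring⟩
      · exact ⟨0, 1, IsNilpotent.zero, IsIdempotentElem.one, by ring⟩
  intro hcol
  have hfree : (nilCleanGraph R).CliqueFree 3 := hcol.cliqueFree (by omega)
  apply hfree {x, y, z}
  rw [SimpleGraph.is3Clique_triple_iff]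
  exact ⟨⟨hxy, axy⟩, ⟨hxz, axz⟩, ⟨hyz, ayz⟩⟩

theorem stmt11 (R : Type*) [CommRing R] [Fintype R] [Nontrivial R] :
    (nilCleanGraph R).Colorable 2 ↔ IsField R := by
  constructor
  · intro hcol
    by_contra h
    exact not_field_not_colorable R h hcol
  · intro hf
    letI := hf.toField
    exact field_colorable R
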